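/- Let D₁ and D₂ be finite multisets of points in the open half-plane ℝ²_< = {(b,d) : b < d} with the ℓ^∞ metric, such that every point of D₁ ∪ D₂ has distance to the diagonal Δ strictly greater than 2·diam(D₁ ∪ D₂), and |D₁| = |D₂| = N. Then the p-Wasserstein distance between the persistence diagrams D₁ and D₂ is achieved by a perfect matching; that is, W_p(D₁, D₂)^p = min over bijections σ : D₁ → D₂ of Σ_{x ∈ D₁} d(x, σ(x))^p. -/

import Mathlib

open scoped Classical

/-- A persistence diagram: a finite multiset of points of the plane (ℓ^∞ metric). -/
abbrev PD := Multiset (ℝ × ℝ)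

/-- The ℓ^∞ distance from a point of the plane to the diagonal `Δ = {(t,t)}`. -/
noncomputable def ddiag (x : ℝ × ℝ) : ℝ := |x.2 - x.1| / 2

/-- The `p`-th power of the `p`-cost of a partial matching `M` (a multiset of pairs whose
first projections form a sub-multiset of `D₁` and second projections a sub-multiset of
`D₂`): matched pairs pay `dist^p` and unmatched points pay their distance to the
diagonal to the `p`. -/
noncomputable def costp (p : ℝ) (D₁ D₂ : PD) (M : Multiset ((ℝ × ℝ) × (ℝ × ℝ))) : ℝ :=
  (M.map fun q => dist q.1 q.2 ^ p).sum +
    ((D₁ - M.map Prod.fst).map fun z => ddiag z ^ p).sum +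
    ((D₂ - M.map Prod.snd).map fun z => ddiag z ^ p).sum

/-- `M` is a partial matching between the diagrams `D₁` and `D₂`. -/
def IsPartialMatching (D₁ D₂ : PD) (M : Multiset ((ℝ × ℝ) × (ℝ × ℝ))) : Prop :=
  M.map Prod.fst ≤ D₁ ∧ M.map Prod.snd ≤ D₂

/-- The `p`-th power of the `p`-Wasserstein distance between persistence diagrams:
the infimum of the `p`-th powers of costs of partial matchings. -/
noncomputable def WDpow (p : ℝ) (D₁ D₂ : PD) : ℝ :=
  sInf {c : ℝ | ∃ M, IsPartialMatching D₁ D₂ M ∧ c = costp p D₁ D₂ M}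

lemma ddiag_nonneg (x : ℝ × ℝ) : 0 ≤ ddiag x := by
  unfold ddiag; positivity

/-- Any partial matching can be extended to a perfect matching of no greater cost,
provided points are far from the diagonal. -/
lemma extend_matching (p : ℝ) (hp : 1 ≤ p) (D₁ D₂ : PD)
    (hcard : Multiset.card D₁ = Multiset.card D₂)
    (hfar : ∀ z ∈ D₁ + D₂, 2 * Metric.diam {w : ℝ × ℝ | w ∈ D₁ + D₂} < ddiag z)
    (M' : Multiset ((ℝ × ℝ) × (ℝ × ℝ))) (h : IsPartialMatching D₁ D₂ M') :
    ∃ M'', M''.map Prod.fst = D₁ ∧ M''.map Prod.snd = D₂ ∧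
      costp p D₁ D₂ M'' ≤ costp p D₁ D₂ M' := by
  obtain ⟨h1, h2⟩ := h
  set L₁ : PD := D₁ - M'.map Prod.fst with hL₁
  set L₂ : PD := D₂ - M'.map Prod.snd with hL₂
  have hcardM : Multiset.card (M'.map Prod.fst) = Multiset.card (M'.map Prod.snd) := by
    simp
  have hlen : L₁.toList.length = L₂.toList.length := by
    simp only [Multiset.length_toList, hL₁, hL₂, Multiset.card_sub h1, Multiset.card_sub h2,
      hcard, hcardM]
  set Z : Multiset ((ℝ × ℝ) × (ℝ × ℝ)) := ↑(L₁.toList.zip L₂.toList) with hZ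
  have hZfst : Z.map Prod.fst = L₁ := by
    rw [hZ, Multiset.map_coe, List.map_fst_zip (le_of_eq hlen), Multiset.coe_toList]
  have hZsnd : Z.map Prod.snd = L₂ := by
    rw [hZ, Multiset.map_coe, List.map_snd_zip (ge_of_eq hlen), Multiset.coe_toList]
  have hfst : (M' + Z).map Prod.fst = D₁ := by
    rw [Multiset.map_add, hZfst, hL₁, add_tsub_cancel_of_le h1]
  have hsnd : (M' + Z).map Prod.snd = D₂ := by
    rw [Multiset.map_add, hZsnd, hL₂, add_tsub_cancel_of_le h2]
  refine ⟨M' + Z, hfst, hsnd, ?_⟩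
  have hbdd : Bornology.IsBounded {w : ℝ × ℝ | w ∈ D₁ + D₂} :=
    (Multiset.finite_toSet (D₁ + D₂)).isBounded
  have hdiam0 : 0 ≤ Metric.diam {w : ℝ × ℝ | w ∈ D₁ + D₂} := Metric.diam_nonneg
  -- pointwise bound on added pairs
  have hpt : ∀ q ∈ Z, dist q.1 q.2 ^ p ≤ ddiag q.1 ^ p := by
    intro q hq
    rw [hZ, Multiset.mem_coe] at hq
    obtain ⟨hq1, hq2⟩ := List.of_mem_zip (a := q.1) (b := q.2) hq
    have hq1' : q.1 ∈ D₁ + D₂ := by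
      rw [Multiset.mem_add]; left
      exact Multiset.mem_of_le (Multiset.sub_le_self _ _)
        (Multiset.mem_toList.mp hq1)
    have hq2' : q.2 ∈ D₁ + D₂ := by
      rw [Multiset.mem_add]; right
      exact Multiset.mem_of_le (Multiset.sub_le_self _ _)
        (Multiset.mem_toList.mp hq2)
    have hdist : dist q.1 q.2 ≤ Metric.diam {w : ℝ × ℝ | w ∈ D₁ + D₂} :=
      Metric.dist_le_diam_of_mem hbdd hq1' hq2'
    have := hfar q.1 hq1'
    exact Real.rpow_le_rpow dist_nonneg (by linarith) (by linarith)
  have hcost'' : costp p D₁ D₂ (M' + Z) =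
      (M'.map fun q => dist q.1 q.2 ^ p).sum + (Z.map fun q => dist q.1 q.2 ^ p).sum := by
    unfold costp
    rw [hfst, hsnd]
    simp [Multiset.map_add]
  have hcost' : costp p D₁ D₂ M' =
      (M'.map fun q => dist q.1 q.2 ^ p).sum + ((L₁.map fun z => ddiag z ^ p).sum +
        (L₂.map fun z => ddiag z ^ p).sum) := by
    unfold costp
    ring
  rw [hcost'', hcost']
  apply add_le_add_right
  have h₁ : (Z.map fun q => dist q.1 q.2 ^ p).sum ≤ (Z.map fun q => ddiag q.1 ^ p).sum :=
    Multiset.sum_map_le_sum_map _ _ hpt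
  have h₂ : (Z.map fun q => ddiag q.1 ^ p) = L₁.map fun z => ddiag z ^ p := by
    rw [← hZfst, Multiset.map_map]; rfl
  have h₃ : 0 ≤ (L₂.map fun z => ddiag z ^ p).sum := by
    apply Multiset.sum_nonneg
    intro x hx
    obtain ⟨z, _, rfl⟩ := Multiset.mem_map.1 hx
    exact Real.rpow_nonneg (ddiag_nonneg z) p
  calc (Z.map fun q => dist q.1 q.2 ^ p).sum ≤ (L₁.map fun z => ddiag z ^ p).sum := by
        rw [← h₂]; exact h₁
    _ ≤ _ := by linarith

/-- If all points of `D₁` and `D₂` lie strictly above the diagonal, both diagrams have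
`N` points, and every point is at distance from the diagonal strictly greater than twice
the diameter of `D₁ ∪ D₂`, then the `p`-Wasserstein distance between the diagrams is
achieved by a perfect matching, which moreover minimizes cost among perfect matchings. -/
theorem WD_achieved_by_perfect_matching (p : ℝ) (hp : 1 ≤ p) (N : ℕ) (hN : 0 < N)
    (D₁ D₂ : PD) (hcard₁ : Multiset.card D₁ = N) (hcard₂ : Multiset.card D₂ = N)
    (habove : ∀ z ∈ D₁ + D₂, z.1 < z.2)
    (hfar : ∀ z ∈ D₁ + D₂, 2 * Metric.diam {w : ℝ × ℝ | w ∈ D₁ + D₂} < ddiag z) :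
    ∃ M : Multiset ((ℝ × ℝ) × (ℝ × ℝ)), M.map Prod.fst = D₁ ∧ M.map Prod.snd = D₂ ∧
      costp p D₁ D₂ M = WDpow p D₁ D₂ ∧
      ∀ M' : Multiset ((ℝ × ℝ) × (ℝ × ℝ)), M'.map Prod.fst = D₁ → M'.map Prod.snd = D₂ →
        costp p D₁ D₂ M ≤ costp p D₁ D₂ M' := by
  have hcard : Multiset.card D₁ = Multiset.card D₂ := by rw [hcard₁, hcard₂]
  -- the set of perfect matchings
  set P : Set (Multiset ((ℝ × ℝ) × (ℝ × ℝ))) :=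
    {M | M.map Prod.fst = D₁ ∧ M.map Prod.snd = D₂} with hP
  -- P is finite
  have hPfin : P.Finite := by
    apply Set.Finite.subset (Multiset.finite_toSet ((N • (D₁ ×ˢ D₂)).powerset))
    intro M hM
    simp only [Multiset.mem_coe, Multiset.mem_powerset]
    rw [Set.mem_setOf_eq, Multiset.le_iff_count]
    intro a
    by_cases ha : a ∈ M
    · have ha1 : a.1 ∈ D₁ := by rw [← hM.1]; exact Multiset.mem_map_of_mem _ ha
      have ha2 : a.2 ∈ D₂ := by rw [← hM.2]; exact Multiset.mem_map_of_mem _ ha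
      have haT : a ∈ D₁ ×ˢ D₂ := Multiset.mem_product.2 ⟨ha1, ha2⟩
      have hcM : Multiset.card M = N := by
        have := congrArg Multiset.card hM.1
        simpa [hcard₁] using this
      calc Multiset.count a M ≤ Multiset.card M := Multiset.count_le_card a M
        _ = N := hcM
        _ = N * 1 := (mul_one N).symm
        _ ≤ N * Multiset.count a (D₁ ×ˢ D₂) := by
            exact Nat.mul_le_mul_left N (Multiset.one_le_count_iff_mem.2 haT)
        _ = Multiset.count a (N • (D₁ ×ˢ D₂)) := (Multiset.count_nsmul a N _).symm
    · simp [Multiset.count_eq_zero_of_notMem ha]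
  -- P is nonempty
  have hPne : P.Nonempty := by
    have hlen : D₁.toList.length = D₂.toList.length := by
      simp [Multiset.length_toList, hcard]
    refine ⟨↑(D₁.toList.zip D₂.toList), ?_, ?_⟩
    · rw [Multiset.map_coe, List.map_fst_zip (le_of_eq hlen), Multiset.coe_toList]
    · rw [Multiset.map_coe, List.map_snd_zip (ge_of_eq hlen), Multiset.coe_toList]
  -- pick a minimizer
  obtain ⟨M, hMP, hMmin⟩ := Set.exists_min_image P (costp p D₁ D₂) hPfin hPne
  refine ⟨M, hMP.1, hMP.2, ?_, fun M' h1 h2 => hMmin M' ⟨h1, h2⟩⟩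
  -- costp M is the least element of the cost set
  have hleast : IsLeast {c : ℝ | ∃ M', IsPartialMatching D₁ D₂ M' ∧ c = costp p D₁ D₂ M'}
      (costp p D₁ D₂ M) := by
    constructor
    · exact ⟨M, ⟨le_of_eq hMP.1, le_of_eq hMP.2⟩, rfl⟩
    · rintro c ⟨M', hM', rfl⟩
      obtain ⟨M'', hf, hs, hle⟩ := extend_matching p hp D₁ D₂ hcard hfar M' hM'
      exact le_trans (hMmin M'' ⟨hf, hs⟩) hle
  rw [WDpow, hleast.csInf_eq]
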